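/- Let n ≥ 1 and let K : ℝ → Matrix (Fin n) (Fin n) ℝ be differentiable with K(t)ᵀ = −K(t) and K(0) = 0, and define Q(t) = (1 − K(t)) * (1 + K(t))⁻¹. Then Q is differentiable and for all t, Q(t)ᵀ * Q′(t) = −2 * ((1 − K(t))⁻¹ * K′(t) * (1 + K(t))⁻¹). -/

import Mathlib

open Matrix

lemma cayley_aux_isUnit_det {n : ℕ} (K : Matrix (Fin n) (Fin n) ℝ)
    (hskew : Kᵀ = -K) : IsUnit (1 + K).det := by
  rw [isUnit_iff_ne_zero]
  intro h
  obtain ⟨v, hv, hmv⟩ := (Matrix.exists_mulVec_eq_zero_iff).2 h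
  have h2 : v ⬝ᵥ (K *ᵥ v) = 0 := by
    have h3 : v ᵥ* K = -(K *ᵥ v) := by
      rw [← Matrix.mulVec_transpose, hskew, Matrix.neg_mulVec]
    have h4 : (v ᵥ* K) ⬝ᵥ v = -(v ⬝ᵥ (K *ᵥ v)) := by
      rw [h3, neg_dotProduct, dotProduct_comm]
    have heq : v ⬝ᵥ (K *ᵥ v) = -(v ⬝ᵥ (K *ᵥ v)) :=
      (Matrix.dotProduct_mulVec v K v).trans h4
    linarith [heq]
  have h5 : v ⬝ᵥ v = 0 := by
    have := congrArg (fun w => v ⬝ᵥ w) hmv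
    simpa [Matrix.add_mulVec, Matrix.one_mulVec, dotProduct_add, h2] using this
  exact hv (dotProduct_self_eq_zero.mp h5)

lemma cayley_aux_hasDerivAt_mul {n : ℕ} {A B : ℝ → Matrix (Fin n) (Fin n) ℝ}
    {A' B' : Matrix (Fin n) (Fin n) ℝ} {t : ℝ}
    (hA : ∀ i j, HasDerivAt (fun τ => A τ i j) (A' i j) t)
    (hB : ∀ i j, HasDerivAt (fun τ => B τ i j) (B' i j) t) (i j : Fin n) :
    HasDerivAt (fun τ => (A τ * B τ) i j) ((A' * B t + A t * B') i j) t := by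
  simp only [Matrix.mul_apply, Matrix.add_apply]
  rw [← Finset.sum_add_distrib]
  exact HasDerivAt.fun_sum fun k _ => (hA i k).mul (hB k j)

lemma cayley_aux_diff_det {n : ℕ} {M : ℝ → Matrix (Fin n) (Fin n) ℝ} {t : ℝ}
    (hM : ∀ i j, DifferentiableAt ℝ (fun τ => M τ i j) t) :
    DifferentiableAt ℝ (fun τ => (M τ).det) t := by
  simp only [Matrix.det_apply']
  exact DifferentiableAt.fun_sum fun σ _ =>
    (differentiableAt_const _).mul (DifferentiableAt.fun_finsetProd fun i _ => hM (σ i) i)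

lemma cayley_aux_diff_inv {n : ℕ} {M : ℝ → Matrix (Fin n) (Fin n) ℝ} {t : ℝ}
    (hM : ∀ i j, DifferentiableAt ℝ (fun τ => M τ i j) t)
    (hdet : (M t).det ≠ 0) (i j : Fin n) :
    DifferentiableAt ℝ (fun τ => (M τ)⁻¹ i j) t := by
  have key : ∀ τ, (M τ)⁻¹ i j = ((M τ).det)⁻¹ * (M τ).adjugate i j := by
    intro τ
    rw [Matrix.inv_def, Matrix.smul_apply, Ring.inverse_eq_inv', smul_eq_mul]
  simp only [key]
  have hadj : DifferentiableAt ℝ (fun τ => (M τ).adjugate i j) t := by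
    simp only [Matrix.adjugate_apply]
    apply cayley_aux_diff_det
    intro a b
    by_cases h : a = j
    · simp only [Matrix.updateRow_apply, h, if_true]
      exact differentiableAt_const _
    · simp only [Matrix.updateRow_apply, h, if_false]
      exact hM a b
  exact ((cayley_aux_diff_det hM).inv hdet).mul hadj

/-- For a differentiable family of skew-symmetric matrices `K(t)` with `K(0) = 0`,
the Cayley transform `Q(t) = (1 − K(t))(1 + K(t))⁻¹` is differentiable and
satisfies `Q(t)ᵀ Q′(t) = −2 (1 − K(t))⁻¹ K′(t) (1 + K(t))⁻¹`. -/
theorem cayley_transform_derivative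
    (n : ℕ) (hn : 1 ≤ n)
    (K K' : ℝ → Matrix (Fin n) (Fin n) ℝ)
    (hK' : ∀ (t : ℝ) (i j : Fin n), HasDerivAt (fun τ => K τ i j) (K' t i j) t)
    (hskew : ∀ t : ℝ, (K t)ᵀ = -(K t))
    (hK0 : K 0 = 0)
    (Q : ℝ → Matrix (Fin n) (Fin n) ℝ)
    (hQ : ∀ t : ℝ, Q t = (1 - K t) * (1 + K t)⁻¹) :
    (∀ (t : ℝ) (i j : Fin n), DifferentiableAt ℝ (fun τ => Q τ i j) t) ∧
      ∀ t : ℝ,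
        (Q t)ᵀ * (Matrix.of fun i j => deriv (fun τ => Q τ i j) t)
          = (-2 : ℝ) • ((1 - K t)⁻¹ * K' t * (1 + K t)⁻¹) := by
  have hdetA : ∀ s, IsUnit (1 + K s).det := fun s => cayley_aux_isUnit_det (K s) (hskew s)
  have hdetB : ∀ s, IsUnit (1 - K s).det := by
    intro s
    have h : (-(K s))ᵀ = -(-(K s)) := by rw [Matrix.transpose_neg, hskew s, neg_neg]
    have := cayley_aux_isUnit_det (-(K s)) h
    rwa [← sub_eq_add_neg] at this
  have hEder : ∀ (s : ℝ) (i j : Fin n), HasDerivAt (fun τ => (1 + K τ) i j) (K' s i j) s := by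
    intro s i j
    simp only [Matrix.add_apply]
    simpa using (hK' s i j).const_add ((1 : Matrix (Fin n) (Fin n) ℝ) i j)
  have hBder : ∀ (s : ℝ) (i j : Fin n),
      HasDerivAt (fun τ => (1 - K τ) i j) ((-(K' s)) i j) s := by
    intro s i j
    simp only [Matrix.sub_apply, Matrix.neg_apply]
    simpa using (hK' s i j).const_sub ((1 : Matrix (Fin n) (Fin n) ℝ) i j)
  have hNdiff : ∀ (s : ℝ) (i j : Fin n),
      DifferentiableAt ℝ (fun τ => (1 + K τ)⁻¹ i j) s :=
    fun s i j => cayley_aux_diff_inv (fun i j => (hEder s i j).differentiableAt)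
      ((hdetA s).ne_zero) i j
  have hQfun : ∀ (i j : Fin n),
      (fun τ => Q τ i j) = (fun τ => ((1 - K τ) * (1 + K τ)⁻¹) i j) :=
    fun i j => funext fun τ => by rw [hQ]
  have hQder : ∀ (s : ℝ) (i j : Fin n),
      HasDerivAt (fun τ => Q τ i j)
        (((-(K' s)) * (1 + K s)⁻¹ +
          (1 - K s) * (Matrix.of fun i j => deriv (fun τ => (1 + K τ)⁻¹ i j) s)) i j) s := by
    intro s i j
    rw [hQfun i j]
    exact cayley_aux_hasDerivAt_mul (hBder s)
      (fun i j => (hNdiff s i j).hasDerivAt) i j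
  constructor
  · exact fun t i j => (hQder t i j).differentiableAt
  intro t
  set A : Matrix (Fin n) (Fin n) ℝ := 1 + K t with hA_def
  set B : Matrix (Fin n) (Fin n) ℝ := 1 - K t with hB_def
  set DN : Matrix (Fin n) (Fin n) ℝ :=
    Matrix.of fun i j => deriv (fun τ => (1 + K τ)⁻¹ i j) t with hDN_def
  -- the derivative of the inverse
  have hprodconst : ∀ (i j : Fin n),
      (fun τ => ((1 + K τ) * (1 + K τ)⁻¹) i j) = (fun _ => (1 : Matrix (Fin n) (Fin n) ℝ) i j) :=
    fun i j => funext fun τ => by rw [Matrix.mul_nonsing_inv _ (hdetA τ)]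
  have hsum : K' t * A⁻¹ + A * DN = 0 := by
    ext i j
    have h1 := cayley_aux_hasDerivAt_mul (hEder t)
      (fun i j => (hNdiff t i j).hasDerivAt) i j
    rw [hprodconst i j] at h1
    have h2 := h1.unique (hasDerivAt_const t _)
    simp [hA_def, hDN_def] at h2 ⊢
    exact h2
  have hDN : DN = -(A⁻¹ * (K' t * A⁻¹)) := by
    have h1 : A * DN = -(K' t * A⁻¹) := by
      rw [add_comm] at hsum
      exact add_eq_zero_iff_eq_neg.mp hsum
    calc DN = A⁻¹ * (A * DN) := by
          rw [← Matrix.mul_assoc, Matrix.nonsing_inv_mul _ (hdetA t), Matrix.one_mul]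
      _ = A⁻¹ * -(K' t * A⁻¹) := by rw [h1]
      _ = -(A⁻¹ * (K' t * A⁻¹)) := by rw [Matrix.mul_neg]
  -- the derivative of Q as a matrix
  have hDQ : (Matrix.of fun i j => deriv (fun τ => Q τ i j) t)
      = (-(K' t)) * A⁻¹ + B * DN := by
    ext i j
    simpa using (hQder t i j).deriv
  -- transpose of Q
  have hQT : (Q t)ᵀ = B⁻¹ * A := by
    rw [hQ, Matrix.transpose_mul, Matrix.transpose_nonsing_inv]
    congr 1
    · rw [Matrix.transpose_add, Matrix.transpose_one, hskew, ← sub_eq_add_neg]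
    · rw [Matrix.transpose_sub, Matrix.transpose_one, hskew, sub_neg_eq_add]
  -- commutation
  have hAB : A * B = B * A := by rw [hA_def, hB_def]; noncomm_ring
  -- final algebra
  rw [hQT, hDQ, hDN]
  have hX : ∀ X : Matrix (Fin n) (Fin n) ℝ, B⁻¹ * A * (B * X) = A * X := by
    intro X
    calc B⁻¹ * A * (B * X) = B⁻¹ * (A * B) * X := by
          rw [Matrix.mul_assoc, Matrix.mul_assoc, Matrix.mul_assoc]
      _ = B⁻¹ * (B * A) * X := by rw [hAB]
      _ = (B⁻¹ * B) * (A * X) := by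
          simp only [Matrix.mul_assoc]
      _ = A * X := by rw [Matrix.nonsing_inv_mul _ (hdetB t), Matrix.one_mul]
  calc B⁻¹ * A * ((-(K' t)) * A⁻¹ + B * -(A⁻¹ * (K' t * A⁻¹)))
      = B⁻¹ * A * ((-(K' t)) * A⁻¹) + B⁻¹ * A * (B * -(A⁻¹ * (K' t * A⁻¹))) := by
        rw [Matrix.mul_add]
    _ = -(B⁻¹ * (A * (K' t * A⁻¹))) + -(K' t * A⁻¹) := by
        rw [hX]
        rw [Matrix.mul_neg, Matrix.neg_mul, Matrix.mul_neg]
        rw [← Matrix.mul_assoc A A⁻¹, Matrix.mul_nonsing_inv _ (hdetA t), Matrix.one_mul]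
        simp only [Matrix.mul_assoc]
    _ = -(B⁻¹ * (A * (K' t * A⁻¹))) + -(B⁻¹ * (B * (K' t * A⁻¹))) := by
        rw [← Matrix.mul_assoc B⁻¹ B, Matrix.nonsing_inv_mul _ (hdetB t), Matrix.one_mul]
    _ = -(B⁻¹ * ((A + B) * (K' t * A⁻¹))) := by
        conv_rhs => rw [Matrix.add_mul, Matrix.mul_add, neg_add]
    _ = (-2 : ℝ) • (B⁻¹ * K' t * A⁻¹) := by
        have hABsum : A + B = (2 : ℝ) • (1 : Matrix (Fin n) (Fin n) ℝ) := by
          rw [hA_def, hB_def]; module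
        rw [hABsum, Matrix.smul_mul, Matrix.one_mul, Matrix.mul_smul, ← neg_smul]
        norm_num [Matrix.mul_assoc]
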